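/- Let G be a finite undirected graph with real symmetric adjacency matrix A whose largest eigenvalue λ > 0 is simple, let eig denote the unit dominant eigenvector, and let η := ∏_{j=2}^{N}(1 - λ_j/λ). For a vertex i, define c({i}) := det(I - (1/λ) A_{∖{i}}), where A_{∖{i}} is A with row and column i deleted. Then c({i}) = η · eig(i)². -/

import Mathlib

open Matrix Polynomial

lemma det_submatrix_ne_eq_adjugate {n : ℕ} {R : Type*} [CommRing R]
    (M : Matrix (Fin (n+1)) (Fin (n+1)) R) (i : Fin (n+1)) :
    Matrix.det (M.submatrix (fun x : {x : Fin (n+1) // x ≠ i} => (x : Fin (n+1)))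
        (fun x : {x : Fin (n+1) // x ≠ i} => (x : Fin (n+1)))) = M.adjugate i i := by
  rw [Matrix.adjugate_fin_succ_eq_det_submatrix,
    ← Matrix.det_submatrix_equiv_self (finSuccAboveEquiv i), Matrix.submatrix_submatrix]
  have hc : ((fun x : {x : Fin (n+1) // x ≠ i} => (x : Fin (n+1))) ∘ (finSuccAboveEquiv i))
      = i.succAbove := by
    funext j; simp [finSuccAboveEquiv_apply]
  rw [hc, Even.neg_one_pow ⟨i, rfl⟩, one_mul]

lemma charpoly_conj {n : Type*} [Fintype n] [DecidableEq n] {R : Type*} [CommRing R]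
    (U D V : Matrix n n R) (hUV : U * V = 1) :
    (U * D * V).charpoly = D.charpoly := by
  have hmap : charmatrix (U * D * V) = U.map C * charmatrix D * V.map C := by
    have h1 : (U * D * V).map (C : R →+* R[X]) = U.map C * D.map C * V.map C := by
      simp [Matrix.map_mul]
    have h2 : U.map (C : R →+* R[X]) * V.map C = 1 := by
      rw [← Matrix.map_mul, hUV]; exact Matrix.map_one _ (map_zero C) (map_one C)
    have hsc : U.map (C : R →+* R[X]) * Matrix.scalar n (X : R[X])
        = Matrix.scalar n (X : R[X]) * U.map C :=
      (Matrix.scalar_commute _ (fun r' => Commute.all _ _) _).symm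
    unfold Matrix.charmatrix
    rw [Matrix.mul_sub, Matrix.sub_mul]
    congr 1
    rw [hsc, Matrix.mul_assoc, h2, Matrix.mul_one]
  have hdet : det (U.map (C : R →+* R[X])) * det (V.map (C : R →+* R[X])) = 1 := by
    rw [← Matrix.det_mul, ← Matrix.map_mul, hUV]
    rw [Matrix.map_one _ (map_zero C) (map_one C), Matrix.det_one]
  unfold Matrix.charpoly
  rw [hmap, Matrix.det_mul, Matrix.det_mul, mul_right_comm, hdet, one_mul]


/-- for a finite undirected graph with symmetric adjacency matrix `A`, simple
largest eigenvalue `λ = lam 0 > 0` and unit dominant eigenvector `v = eig`, the single-vertex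
centrality `c({i}) = det(I - (1/λ) A_{∖{i}})` equals `η · eig(i)²`, `η = ∏_{j≥2}(1-λ_j/λ)`. -/
theorem vertex_centrality_eq_eta_mul_eigvec_sq {N : ℕ}
    (A : Matrix (Fin (N + 1)) (Fin (N + 1)) ℝ) (hA : A.IsSymm)
    (lam : Fin (N + 1) → ℝ)
    (hchar : A.charpoly = ∏ i, (Polynomial.X - Polynomial.C (lam i)))
    (hdom : ∀ j, j ≠ 0 → lam j < lam 0) (hpos : 0 < lam 0)
    (eig : Fin (N + 1) → ℝ) (hv : A.mulVec eig = lam 0 • eig)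
    (hunit : ∑ i, eig i ^ 2 = 1) (i : Fin (N + 1)) :
    Matrix.det
        (1 - (lam 0)⁻¹ • A.submatrix (fun x : {x : Fin (N + 1) // x ≠ i} => (x : Fin (N + 1)))
              (fun x : {x : Fin (N + 1) // x ≠ i} => (x : Fin (N + 1)))) =
      (∏ j ∈ Finset.univ.erase 0, (1 - lam j / lam 0)) * eig i ^ 2 := by
  have hl0 : (lam 0) ≠ 0 := ne_of_gt hpos
  have hH : A.IsHermitian := by
    rw [Matrix.IsHermitian, Matrix.conjTranspose_eq_transpose_of_trivial]; exact hA
  set U : Matrix (Fin (N+1)) (Fin (N+1)) ℝ := (hH.eigenvectorUnitary : Matrix (Fin (N+1)) (Fin (N+1)) ℝ) with hUdef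
  set V : Matrix (Fin (N+1)) (Fin (N+1)) ℝ := star U with hVdef
  set μ : Fin (N+1) → ℝ := hH.eigenvalues with hμdef
  have hUV : U * V = 1 := (Matrix.mem_unitaryGroup_iff).mp (hH.eigenvectorUnitary).2
  have hVU : V * U = 1 := (Matrix.mem_unitaryGroup_iff').mp (hH.eigenvectorUnitary).2
  have hspec : A = U * Matrix.diagonal μ * V := by
    have := hH.spectral_theorem
    rwa [RCLike.ofReal_real_eq_id, Function.id_comp] at this
  -- step 0: reduce to adjugate
  have hsub : ((1 : Matrix (Fin (N+1)) (Fin (N+1)) ℝ) - (lam 0)⁻¹ • A).submatrix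
          (fun x : {x : Fin (N+1) // x ≠ i} => (x : Fin (N+1)))
          (fun x : {x : Fin (N+1) // x ≠ i} => (x : Fin (N+1)))
      = (1 : Matrix {x : Fin (N+1) // x ≠ i} {x : Fin (N+1) // x ≠ i} ℝ)
        - (lam 0)⁻¹ • A.submatrix (fun x : {x : Fin (N+1) // x ≠ i} => (x : Fin (N+1)))
          (fun x : {x : Fin (N+1) // x ≠ i} => (x : Fin (N+1))) := by
    ext a b
    simp [Matrix.submatrix_apply, Matrix.one_apply, Subtype.ext_iff]
  rw [← hsub, det_submatrix_ne_eq_adjugate]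
  -- multiset of eigenvalues
  have hcharμ : A.charpoly = ∏ j, (Polynomial.X - Polynomial.C (μ j)) := by
    rw [hspec, charpoly_conj _ _ _ hUV, Matrix.charpoly]
    have : Matrix.charmatrix (Matrix.diagonal μ)
        = Matrix.diagonal fun j => (Polynomial.X - Polynomial.C (μ j)) := by
      ext a b
      rcases eq_or_ne a b with rfl | hab
      · simp
      · simp [hab, Matrix.charmatrix_apply_ne _ _ _ hab, Matrix.diagonal_apply_ne _ hab]
    rw [this, Matrix.det_diagonal]
  have hms : Multiset.map μ Finset.univ.val = Multiset.map lam Finset.univ.val := by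
    have h1 : ((Multiset.map μ Finset.univ.val).map fun a => Polynomial.X - Polynomial.C a).prod
        = ((Multiset.map lam Finset.univ.val).map fun a => Polynomial.X - Polynomial.C a).prod := by
      rw [Multiset.map_map, Multiset.map_map]
      exact (hcharμ.symm.trans hchar :)
    have := congrArg Polynomial.roots h1
    rwa [Polynomial.roots_multiset_prod_X_sub_C, Polynomial.roots_multiset_prod_X_sub_C] at this
  -- unique index j0 with μ j0 = lam 0
  have hmem : lam 0 ∈ Multiset.map μ Finset.univ.val := by
    rw [hms]
    exact Multiset.mem_map.mpr ⟨0, Finset.mem_val.mpr (Finset.mem_univ 0), rfl⟩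
  obtain ⟨j0, -, hj0⟩ := Multiset.mem_map.mp hmem
  have hcountlam : (Finset.univ.filter (fun a => lam 0 = lam a)).card = 1 := by
    have : Finset.univ.filter (fun a => lam 0 = lam a) = {0} := by
      ext j
      simp only [Finset.mem_filter, Finset.mem_univ, true_and, Finset.mem_singleton]
      constructor
      · intro h
        by_contra hne
        exact absurd h.symm (ne_of_lt (hdom j hne))
      · rintro rfl; rfl
    rw [this, Finset.card_singleton]
  have hcountμ : (Finset.univ.filter (fun a => lam 0 = μ a)).card = 1 := by
    have h1 : Multiset.count (lam 0) (Multiset.map μ Finset.univ.val)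
        = Multiset.count (lam 0) (Multiset.map lam Finset.univ.val) := by rw [hms]
    rwa [Multiset.count_map, Multiset.count_map, ← Finset.filter_val, ← Finset.filter_val,
      ← Finset.card_def, ← Finset.card_def, hcountlam] at h1
  have huniq : ∀ k, μ k = lam 0 → k = j0 := by
    intro k hk
    have hmemk : k ∈ Finset.univ.filter (fun a => lam 0 = μ a) := by
      simp [hk.symm]
    have hmemj0 : j0 ∈ Finset.univ.filter (fun a => lam 0 = μ a) := by
      simp [hj0.symm]
    exact Finset.card_le_one.mp (le_of_eq hcountμ) k hmemk j0 hmemj0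
  -- eigenvector coordinates
  set w : Fin (N+1) → ℝ := V *ᵥ eig with hwdef
  have hw : ∀ k, k ≠ j0 → w k = 0 := by
    intro k hk
    have hcommute : V * A = Matrix.diagonal μ * V := by
      rw [hspec, ← Matrix.mul_assoc, ← Matrix.mul_assoc, hVU, Matrix.one_mul]
    have h1 : Matrix.diagonal μ *ᵥ w = lam 0 • w := by
      rw [hwdef, Matrix.mulVec_mulVec, ← hcommute, ← Matrix.mulVec_mulVec, hv,
        Matrix.mulVec_smul]
    have h2 : μ k * w k = lam 0 * w k := by
      have := congrFun h1 k
      rwa [Matrix.mulVec_diagonal] at this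
    have hμk : μ k ≠ lam 0 := fun h => hk (huniq k h)
    rcases mul_eq_mul_right_iff.mp h2 with h | h
    · exact absurd h hμk
    · exact h
  have heigi : ∀ i', eig i' = U i' j0 * w j0 := by
    have heq : U *ᵥ w = eig := by
      rw [hwdef, Matrix.mulVec_mulVec, hUV, Matrix.one_mulVec]
    intro i'
    rw [← heq]
    rw [Matrix.mulVec, dotProduct]
    rw [Finset.sum_eq_single j0]
    · intro k _ hk; rw [hw k hk, mul_zero]
    · intro h; exact absurd (Finset.mem_univ j0) h
  have hcol : ∑ i', U i' j0 ^ 2 = 1 := by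
    have := congrFun (congrFun hVU j0) j0
    rw [Matrix.mul_apply, Matrix.one_apply_eq] at this
    rw [← this]
    refine Finset.sum_congr rfl fun k _ => ?_
    rw [hVdef, Matrix.star_apply, star_trivial, sq]
  have hw0 : w j0 ^ 2 = 1 := by
    have : ∑ i', eig i' ^ 2 = w j0 ^ 2 * ∑ i', U i' j0 ^ 2 := by
      rw [Finset.mul_sum]
      refine Finset.sum_congr rfl fun k _ => ?_
      rw [heigi k]; ring
    rw [hunit, hcol, mul_one] at this
    exact this.symm
  have heigsq : eig i ^ 2 = U i j0 ^ 2 := by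
    rw [heigi i, mul_pow, mul_comm, hw0, one_mul]
  -- the diagonal entries of I - λ⁻¹ D
  set d : Fin (N+1) → ℝ := fun k => 1 - (lam 0)⁻¹ * μ k with hddef
  have hMdec : (1 : Matrix (Fin (N+1)) (Fin (N+1)) ℝ) - (lam 0)⁻¹ • A
      = U * Matrix.diagonal d * V := by
    have hdiag : Matrix.diagonal d
        = 1 - (lam 0)⁻¹ • Matrix.diagonal μ := by
      rw [← Matrix.diagonal_one, ← Matrix.diagonal_smul, ← Matrix.diagonal_sub]
      rfl
    rw [hdiag, Matrix.mul_sub, Matrix.sub_mul, Matrix.mul_one, hUV, Matrix.mul_smul,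
      Matrix.smul_mul, ← hspec]
  have hadjU : Matrix.adjugate U = U.det • V := by
    calc Matrix.adjugate U = Matrix.adjugate U * (U * V) := by rw [hUV, Matrix.mul_one]
      _ = (Matrix.adjugate U * U) * V := by rw [Matrix.mul_assoc]
      _ = (U.det • 1) * V := by rw [Matrix.adjugate_mul]
      _ = U.det • V := by rw [Matrix.smul_mul, Matrix.one_mul]
  have hadjV : Matrix.adjugate V = V.det • U := by
    calc Matrix.adjugate V = Matrix.adjugate V * (V * U) := by rw [hVU, Matrix.mul_one]
      _ = (Matrix.adjugate V * V) * U := by rw [Matrix.mul_assoc]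
      _ = (V.det • 1) * U := by rw [Matrix.adjugate_mul]
      _ = V.det • U := by rw [Matrix.smul_mul, Matrix.one_mul]
  have hdetVU : V.det * U.det = 1 := by rw [← Matrix.det_mul, hVU, Matrix.det_one]
  have hadjM : Matrix.adjugate ((1 : Matrix (Fin (N+1)) (Fin (N+1)) ℝ) - (lam 0)⁻¹ • A)
      = U * Matrix.adjugate (Matrix.diagonal d) * V := by
    rw [hMdec, Matrix.adjugate_mul_distrib, Matrix.adjugate_mul_distrib, hadjU, hadjV]
    rw [Matrix.smul_mul, Matrix.mul_smul, Matrix.mul_smul, smul_smul, hdetVU, one_smul,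
      ← Matrix.mul_assoc]
  -- the erased product identity
  have herase : ∏ k ∈ Finset.univ.erase j0, d k
      = ∏ j ∈ Finset.univ.erase 0, (1 - lam j / lam 0) := by
    have hmul : Multiset.map μ (Finset.univ.erase j0).val
        = Multiset.map lam (Finset.univ.erase 0).val := by
      have e1 : μ j0 ::ₘ Multiset.map μ (Finset.univ.erase j0).val
          = Multiset.map μ Finset.univ.val := by
        rw [← Multiset.map_cons, Finset.erase_val,
          Multiset.cons_erase (Finset.mem_val.mpr (Finset.mem_univ j0))]
      have e2 : lam 0 ::ₘ Multiset.map lam (Finset.univ.erase 0).val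
          = Multiset.map lam Finset.univ.val := by
        rw [← Multiset.map_cons, Finset.erase_val,
          Multiset.cons_erase (Finset.mem_val.mpr (Finset.mem_univ 0))]
      have : lam 0 ::ₘ Multiset.map μ (Finset.univ.erase j0).val
          = lam 0 ::ₘ Multiset.map lam (Finset.univ.erase 0).val := by
        rw [← hj0] at e2 ⊢
        rw [e1, e2, hms]
      exact (Multiset.cons_inj_right _).mp this
    have hL : ∏ k ∈ Finset.univ.erase j0, d k
        = ((Multiset.map μ (Finset.univ.erase j0).val).map
            (fun t => 1 - (lam 0)⁻¹ * t)).prod := by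
      rw [Multiset.map_map, Finset.prod_eq_multiset_prod]
      rfl
    have hR : ∏ j ∈ Finset.univ.erase 0, (1 - lam j / lam 0)
        = ((Multiset.map lam (Finset.univ.erase 0).val).map
            (fun t => 1 - (lam 0)⁻¹ * t)).prod := by
      rw [Multiset.map_map, Finset.prod_eq_multiset_prod]
      refine congrArg Multiset.prod (Multiset.map_congr rfl fun j _ => ?_)
      simp only [Function.comp_apply, div_eq_mul_inv, mul_comm]
    rw [hL, hR, hmul]
  -- putting it together
  rw [hadjM, Matrix.adjugate_diagonal, Matrix.mul_apply]
  have hdj0 : d j0 = 0 := by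
    rw [hddef]
    simp only [hj0]
    rw [inv_mul_cancel₀ hl0, sub_self]
  rw [Finset.sum_eq_single j0]
  · rw [Matrix.mul_diagonal]
    have hVji : V j0 i = U i j0 := by rw [hVdef, Matrix.star_apply, star_trivial]
    rw [hVji, herase, heigsq]
    ring
  · intro b _ hb
    rw [Matrix.mul_diagonal]
    have : ∏ k ∈ Finset.univ.erase b, d k = 0 :=
      Finset.prod_eq_zero (Finset.mem_erase.mpr ⟨Ne.symm hb , Finset.mem_univ j0⟩) hdj0
    rw [this, mul_zero, zero_mul]
  · intro h; exact absurd (Finset.mem_univ j0) h
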